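/- Let b be a locally finite, connected, weakly spherically symmetric graph over (X,m) with root o. If Σ_{r=1}^∞ √(min(m(S_r), m(S_{r+1})))/√(|∂B_r|) = ∞, where S_r is the combinatorial r-sphere around o and |∂B_r| = Σ_{x∈S_r, y∈S_{r+1}} b(x,y), then there exists a sequence (χ_n) in C_c(X) of radially symmetric functions with χ_n → 1 pointwise and |∇χ_n|² ≤ 2, where |∇f|²(x) = (1/m(x))Σ_y b(x,y)(f(x)-f(y))². -/

import Mathlib

open scoped BigOperators

variable {X : Type*}

/-- A weighted graph over a vertex set `X`. -/
structure IsGraph (b : X → X → ℝ) : Prop where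
  symm : ∀ x y, b x y = b y x
  nonneg : ∀ x y, 0 ≤ b x y
  loopless : ∀ x, b x x = 0
  degSummable : ∀ x, Summable (fun y => b x y)

/-- A pseudo metric on `X`. -/
structure IsPseudoMetric (σ : X → X → ℝ) : Prop where
  nonneg : ∀ x y, 0 ≤ σ x y
  refl : ∀ x, σ x x = 0
  symm : ∀ x y, σ x y = σ y x
  triangle : ∀ x y z, σ x z ≤ σ x y + σ y z

/-- `σ` is intrinsic with respect to `b` and `m`:
`∑_y b(x,y) σ(x,y)² ≤ m(x)` for all `x` (with the sum converging). -/
def IsIntrinsic (b : X → X → ℝ) (m : X → ℝ) (σ : X → X → ℝ) : Prop :=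
  ∀ x, Summable (fun y => b x y * σ x y ^ 2) ∧ ∑' y, b x y * σ x y ^ 2 ≤ m x

/-- `γ 0, γ 1, …, γ n` is a path in the graph `b`. -/
def IsPath (b : X → X → ℝ) (γ : ℕ → X) (n : ℕ) : Prop :=
  ∀ i < n, 0 < b (γ i) (γ (i + 1))

/-- The length of the path `γ 0, …, γ n` with respect to the weight `w`. -/
noncomputable def pathLen (w : X → X → ℝ) (γ : ℕ → X) (n : ℕ) : ℝ :=
  ∑ i ∈ Finset.range n, min (w (γ i) (γ (i + 1))) (w (γ (i + 1)) (γ i))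

/-- The path pseudo metric induced by the weight `w`. -/
noncomputable def pathDist (b w : X → X → ℝ) (x y : X) : ℝ :=
  sInf {L | ∃ n γ, IsPath b γ n ∧ γ 0 = x ∧ γ n = y ∧ L = pathLen w γ n}

/-- The graph `b` is connected. -/
def GraphConnected (b : X → X → ℝ) : Prop :=
  ∀ x y : X, ∃ n γ, IsPath b γ n ∧ γ 0 = x ∧ γ n = y

/-- The graph `b` is locally finite. -/
def LocFin (b : X → X → ℝ) : Prop := ∀ x, {y | 0 < b x y}.Finite

/-- The canonical pseudo metric: the pointwise supremum of all intrinsic pseudo metrics. -/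
noncomputable def kappa (b : X → X → ℝ) (m : X → ℝ) (x y : X) : ℝ :=
  sSup {t | ∃ σ, IsPseudoMetric σ ∧ IsIntrinsic b m σ ∧ t = σ x y}

/-- `b` is a star graph with center `p`: it is connected and every vertex
different from `p` has exactly one neighbor. -/
def IsStarCenter (b : X → X → ℝ) (p : X) : Prop :=
  GraphConnected b ∧ ∀ x, x ≠ p → ∃! y, 0 < b x y

/-- The combinatorial distance from `o` to `x` in the graph `b`. -/
noncomputable def combDist (b : X → X → ℝ) (o x : X) : ℕ :=
  sInf {n | ∃ γ : ℕ → X, IsPath b γ n ∧ γ 0 = o ∧ γ n = x}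

/-- A function is radially symmetric (w.r.t. the root `o`) if its value only
depends on the combinatorial distance to `o`. -/
def RadSymm (b : X → X → ℝ) (o : X) (f : X → ℝ) : Prop :=
  ∀ x y, combDist b o x = combDist b o y → f x = f y

/-- The measure of the combinatorial `r`-sphere around `o`. -/
noncomputable def sphMass (b : X → X → ℝ) (m : X → ℝ) (o : X) (r : ℕ) : ℝ :=
  ∑' x : {x : X // combDist b o x = r}, m x

/-- The weighted size `|∂B_r|` of the boundary of the combinatorial `r`-ball. -/
noncomputable def bdry (b : X → X → ℝ) (o : X) (r : ℕ) : ℝ :=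
  ∑' p : {x : X // combDist b o x = r} × {y : X // combDist b o y = r + 1},
    b p.1 p.2

/-- The graph `b` over `(X,m)` is weakly spherically symmetric with root `o`:
the functions `κ₊` and `κ₋` are radially symmetric. -/
def WSS (b : X → X → ℝ) (m : X → ℝ) (o : X) : Prop :=
  ∀ x y, combDist b o x = combDist b o y →
    ((1 / m x) * ∑' z : {z : X // combDist b o z = combDist b o x + 1}, b x z =
      (1 / m y) * ∑' z : {z : X // combDist b o z = combDist b o y + 1}, b y z) ∧
    ((1 / m x) * ∑' z : {z : X // combDist b o z = combDist b o x - 1}, b x z =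
      (1 / m y) * ∑' z : {z : X // combDist b o z = combDist b o y - 1}, b y z)

section stmt19aux
variable (b : X → X → ℝ) (m : X → ℝ) (o : X)

theorem tsum_set_eq_sum' {f : X → ℝ} {S : Set X} (hS : S.Finite) :
    ∑' x : S, f x = ∑ x ∈ hS.toFinset, f x := by
  rw [tsum_subtype, tsum_eq_sum (s := hS.toFinset)]
  · exact Finset.sum_congr rfl fun x hx =>
      Set.indicator_of_mem (hS.mem_toFinset.mp hx) f
  · exact fun x hx => Set.indicator_of_notMem (fun h => hx (hS.mem_toFinset.mpr h)) f

theorem tsum_prod_set_eq_sum' {f : X → X → ℝ} {S T : Set X} (hS : S.Finite) (hT : T.Finite) :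
    ∑' p : S × T, f p.1 p.2 = ∑ x ∈ hS.toFinset, ∑ y ∈ hT.toFinset, f x y := by
  haveI := hS.fintype
  haveI := hT.fintype
  rw [tsum_fintype, Fintype.sum_prod_type]
  have h1 : ∀ x : S, ∑ y : T, f x y = ∑ y ∈ hT.toFinset, f x y := by
    intro x
    rw [← tsum_fintype (L := SummationFilter.unconditional _)]
    exact tsum_set_eq_sum' hT
  rw [Finset.sum_congr rfl fun x _ => h1 x, ← tsum_fintype (L := SummationFilter.unconditional _)]
  exact tsum_set_eq_sum' (f := fun x => ∑ y ∈ hT.toFinset, f x y) hS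

theorem combDist_le' {x : X} {n : ℕ} {γ : ℕ → X} (h : IsPath b γ n) (h0 : γ 0 = o)
    (hn : γ n = x) : combDist b o x ≤ n :=
  Nat.sInf_le ⟨γ, h, h0, hn⟩

theorem combDist_spec' (hconn : GraphConnected b) (x : X) :
    ∃ γ : ℕ → X, IsPath b γ (combDist b o x) ∧ γ 0 = o ∧ γ (combDist b o x) = x := by
  have hne : {n | ∃ γ : ℕ → X, IsPath b γ n ∧ γ 0 = o ∧ γ n = x}.Nonempty := by
    obtain ⟨n, γ, h⟩ := hconn o x
    exact ⟨n, γ, h⟩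
  exact Nat.sInf_mem hne

theorem eq_o_of_combDist_eq_zero' (hconn : GraphConnected b) {x : X}
    (h : combDist b o x = 0) : x = o := by
  obtain ⟨γ, _, h0, hn⟩ := combDist_spec' b o hconn x
  rw [h] at hn; rw [← hn, h0]

theorem combDist_le_succ_of_adj' (hconn : GraphConnected b) {x y : X} (h : 0 < b x y) :
    combDist b o y ≤ combDist b o x + 1 := by
  obtain ⟨γ, hγ, h0, hn⟩ := combDist_spec' b o hconn x
  set n := combDist b o x
  refine combDist_le' b o (γ := fun i => if i ≤ n then γ i else y) (n := n + 1) ?_ ?_ ?_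
  · intro i hi
    rcases lt_or_ge i n with hin | hin
    · simp only [if_pos (le_of_lt hin), if_pos (by omega : i + 1 ≤ n)]
      exact hγ i hin
    · have : i = n := by omega
      subst this
      simp only [if_pos le_rfl, if_neg (by omega : ¬ n + 1 ≤ n), hn]
      exact h
  · simp only [if_pos (Nat.zero_le n), h0]
  · simp only [if_neg (by omega : ¬ n + 1 ≤ n)]

theorem exists_pred' (hconn : GraphConnected b) {x : X} {k : ℕ}
    (h : combDist b o x = k + 1) : ∃ y, combDist b o y = k ∧ 0 < b y x := by
  obtain ⟨γ, hγ, h0, hn⟩ := combDist_spec' b o hconn x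
  rw [h] at hγ hn
  refine ⟨γ k, ?_, by simpa [hn] using hγ k (by omega)⟩
  have h1 : combDist b o (γ k) ≤ k := combDist_le' b o (fun i hi => hγ i (by omega)) h0 rfl
  have h2 : combDist b o x ≤ combDist b o (γ k) + 1 := by
    refine combDist_le_succ_of_adj' b o hconn ?_
    simpa [hn] using hγ k (by omega)
  omega

theorem sphere_finite' (hconn : GraphConnected b) (hlf : LocFin b) (r : ℕ) :
    {x | combDist b o x = r}.Finite := by
  induction r with
  | zero =>
      exact Set.Finite.subset (Set.finite_singleton o)
        (fun x hx => eq_o_of_combDist_eq_zero' b o hconn hx)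
  | succ k ih =>
      have hsub : {x | combDist b o x = k + 1} ⊆
          ⋃ y ∈ {x | combDist b o x = k}, {z | 0 < b y z} := by
        intro x hx
        obtain ⟨y, hy, hyx⟩ := exists_pred' b o hconn hx
        exact Set.mem_biUnion hy hyx
      exact Set.Finite.subset (Set.Finite.biUnion ih (fun y _ => hlf y)) hsub

/-- The sphere of radius `r` as a Finset. -/
noncomputable def sphF (hconn : GraphConnected b) (hlf : LocFin b) (r : ℕ) : Finset X :=
  (sphere_finite' b o hconn hlf r).toFinset

theorem mem_sphF {hconn : GraphConnected b} {hlf : LocFin b} {r : ℕ} {x : X} :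
    x ∈ sphF b o hconn hlf r ↔ combDist b o x = r :=
  (sphere_finite' b o hconn hlf r).mem_toFinset

theorem sphMass_eq' (hconn : GraphConnected b) (hlf : LocFin b) (r : ℕ) :
    sphMass b m o r = ∑ x ∈ sphF b o hconn hlf r, m x :=
  tsum_set_eq_sum' (f := m) (sphere_finite' b o hconn hlf r)

theorem bdry_eq' (hconn : GraphConnected b) (hlf : LocFin b) (r : ℕ) :
    bdry b o r = ∑ x ∈ sphF b o hconn hlf r, ∑ y ∈ sphF b o hconn hlf (r + 1), b x y :=
  tsum_prod_set_eq_sum' (f := b) (sphere_finite' b o hconn hlf r)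
    (sphere_finite' b o hconn hlf (r + 1))

theorem bsum_eq' (hconn : GraphConnected b) (hlf : LocFin b) (x : X) (k : ℕ) :
    ∑' z : {z : X // combDist b o z = k}, b x z = ∑ z ∈ sphF b o hconn hlf k, b x z :=
  tsum_set_eq_sum' (f := fun z => b x z) (sphere_finite' b o hconn hlf k)

end stmt19aux
section stmt19aux2
variable (b : X → X → ℝ) (m : X → ℝ) (o : X)

theorem kplus_eq' (hm : ∀ x, 0 < m x) (hwss : WSS b m o)
    (hconn : GraphConnected b) (hlf : LocFin b) {x : X} {k : ℕ}
    (hx : combDist b o x = k) :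
    ((1 / m x) * ∑ z ∈ sphF b o hconn hlf (k + 1), b x z) * sphMass b m o k =
      bdry b o k := by
  set c := (1 / m x) * ∑ z ∈ sphF b o hconn hlf (k + 1), b x z with hc
  rw [bdry_eq' b o hconn hlf, sphMass_eq' b m o hconn hlf]
  have key : ∀ x' ∈ sphF b o hconn hlf k, ∑ z ∈ sphF b o hconn hlf (k + 1), b x' z
      = m x' * c := by
    intro x' hx'
    have hd' : combDist b o x' = k := (mem_sphF b o).mp hx'
    have h := (hwss x' x (hd'.trans hx.symm)).1
    rw [hd', hx, bsum_eq' b o hconn hlf x' (k + 1), bsum_eq' b o hconn hlf x (k + 1)] at h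
    rw [← hc] at h
    have hmx' := (hm x').ne'
    field_simp at h ⊢
    linarith [h]
  rw [Finset.sum_congr rfl key, ← Finset.sum_mul, mul_comm]

theorem kminus_eq' (hb : IsGraph b) (hm : ∀ x, 0 < m x) (hwss : WSS b m o)
    (hconn : GraphConnected b) (hlf : LocFin b) {x : X} {k : ℕ}
    (hx : combDist b o x = k + 1) :
    ((1 / m x) * ∑ z ∈ sphF b o hconn hlf k, b x z) * sphMass b m o (k + 1) =
      bdry b o k := by
  set c := (1 / m x) * ∑ z ∈ sphF b o hconn hlf k, b x z with hc
  rw [bdry_eq' b o hconn hlf, sphMass_eq' b m o hconn hlf, Finset.sum_comm]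
  have key : ∀ y ∈ sphF b o hconn hlf (k + 1), ∑ z ∈ sphF b o hconn hlf k, b z y
      = m y * c := by
    intro y hy
    have hd' : combDist b o y = k + 1 := (mem_sphF b o).mp hy
    have h := (hwss y x (hd'.trans hx.symm)).2
    rw [hd', hx] at h
    have h2 : (1 / m y) * ∑' z : {z : X // combDist b o z = k}, b y ↑z =
        (1 / m x) * ∑' z : {z : X // combDist b o z = k}, b x ↑z := h
    clear h
    rw [bsum_eq' b o hconn hlf y k, bsum_eq' b o hconn hlf x k] at h2
    rw [← hc] at h2
    have hsum : ∑ z ∈ sphF b o hconn hlf k, b z y = ∑ z ∈ sphF b o hconn hlf k, b y z :=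
      Finset.sum_congr rfl fun z _ => hb.symm z y
    rw [hsum]
    have hmy := (hm y).ne'
    field_simp at h2 ⊢
    linarith [h2]
  rw [Finset.sum_congr rfl key, ← Finset.sum_mul, mul_comm]

theorem sphMass_pos' (hm : ∀ x, 0 < m x) (hconn : GraphConnected b) (hlf : LocFin b)
    {r : ℕ} (hne : ∃ x, combDist b o x = r) : 0 < sphMass b m o r := by
  rw [sphMass_eq' b m o hconn hlf]
  obtain ⟨x, hx⟩ := hne
  exact Finset.sum_pos' (fun y _ => (hm y).le) ⟨x, (mem_sphF b o).mpr hx, hm x⟩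

theorem bdry_pos' (hb : IsGraph b) (hconn : GraphConnected b) (hlf : LocFin b)
    {r : ℕ} (hne : ∃ y, combDist b o y = r + 1) : 0 < bdry b o r := by
  obtain ⟨y, hy⟩ := hne
  obtain ⟨x, hx, hxy⟩ := exists_pred' b o hconn hy
  rw [bdry_eq' b o hconn hlf]
  refine Finset.sum_pos' (fun z _ => Finset.sum_nonneg fun w _ => hb.nonneg z w)
    ⟨x, (mem_sphF b o).mpr hx, ?_⟩
  exact Finset.sum_pos' (fun w _ => hb.nonneg x w) ⟨y, (mem_sphF b o).mpr hy, hxy⟩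

end stmt19aux2
/-- on a locally finite, connected, weakly spherically symmetric
graph, divergence of `∑_r √(min(m(S_r), m(S_{r+1})))/√(|∂B_r|)` yields finitely
supported radially symmetric cut-off functions `χ_n → 1` with `|∇χ_n|² ≤ 2`. -/
theorem stmt_19 (b : X → X → ℝ) (m : X → ℝ) (o : X)
    (hb : IsGraph b) (hm : ∀ x, 0 < m x) (hlf : LocFin b)
    (hconn : GraphConnected b) (hwss : WSS b m o)
    (hdiv : ¬ Summable (fun r : ℕ =>
      Real.sqrt (min (sphMass b m o (r + 1)) (sphMass b m o (r + 2))) /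
        Real.sqrt (bdry b o (r + 1)))) :
    ∃ χ : ℕ → X → ℝ,
      (∀ n, (Function.support (χ n)).Finite ∧ RadSymm b o (χ n) ∧
        ∀ x, (1 / m x) * ∑' y, b x y * (χ n x - χ n y) ^ 2 ≤ 2) ∧
      ∀ x, Filter.Tendsto (fun n => χ n x) Filter.atTop (nhds 1) := by
  classical
  -- all spheres are nonempty
  have hne : ∀ r : ℕ, ∃ x, combDist b o x = r := by
    by_contra h
    push_neg at h
    obtain ⟨r, hr⟩ := h
    have hdown : ∀ k : ℕ, (∃ x, combDist b o x = k + 1) → ∃ x, combDist b o x = k := by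
      rintro k ⟨x, hx⟩
      obtain ⟨y, hy, -⟩ := exists_pred' b o hconn hx
      exact ⟨y, hy⟩
    have hempty : ∀ j : ℕ, ¬ ∃ x, combDist b o x = r + j := by
      intro j
      induction j with
      | zero => rintro ⟨x, hx⟩; exact hr x (by omega)
      | succ i ih =>
        rintro ⟨x, hx⟩
        exact ih (hdown (r + i) ⟨x, by omega⟩)
    have hzero : ∀ j : ℕ, r ≤ j → sphMass b m o j = 0 := by
      intro j hj
      haveI : IsEmpty {x : X // combDist b o x = j} :=
        ⟨fun z => hempty (j - r) ⟨z.1, by have := z.2; omega⟩⟩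
      exact tsum_empty
    apply hdiv
    refine summable_of_ne_finset_zero (s := Finset.range r) ?_
    intro n hn
    have hn' : r ≤ n := by simpa using hn
    rw [hzero (n + 1) (by omega), hzero (n + 2) (by omega)]
    simp
  have hmpos : ∀ r, 0 < sphMass b m o r := fun r =>
    sphMass_pos' b m o hm hconn hlf (hne r)
  have hbpos : ∀ r, 0 < bdry b o r := fun r =>
    bdry_pos' b o hb hconn hlf (hne (r + 1))
  set u : ℕ → ℝ := fun r =>
    Real.sqrt (min (sphMass b m o (r + 1)) (sphMass b m o (r + 2))) /
      Real.sqrt (bdry b o (r + 1)) with hu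
  set g : ℕ → ℝ := fun r => min 1 (u r) with hg
  have hu0 : ∀ r, 0 ≤ u r := fun r => div_nonneg (Real.sqrt_nonneg _) (Real.sqrt_nonneg _)
  have hg0 : ∀ r, 0 ≤ g r := fun r => le_min zero_le_one (hu0 r)
  have hgsq : ∀ r, g r ^ 2 * bdry b o (r + 1) ≤
      min (sphMass b m o (r + 1)) (sphMass b m o (r + 2)) := by
    intro r
    have hmin : (0:ℝ) ≤ min (sphMass b m o (r + 1)) (sphMass b m o (r + 2)) :=
      (lt_min (hmpos _) (hmpos _)).le
    have husq : u r ^ 2 = min (sphMass b m o (r + 1)) (sphMass b m o (r + 2)) /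
        bdry b o (r + 1) := by
      rw [hu]
      dsimp only
      rw [div_pow, Real.sq_sqrt hmin, Real.sq_sqrt (hbpos (r + 1)).le]
    have h2 : g r ^ 2 ≤ u r ^ 2 := pow_le_pow_left₀ (hg0 r) (min_le_right _ _) 2
    rw [husq] at h2
    calc g r ^ 2 * bdry b o (r + 1)
        ≤ (min (sphMass b m o (r + 1)) (sphMass b m o (r + 2)) / bdry b o (r + 1)) *
          bdry b o (r + 1) := mul_le_mul_of_nonneg_right h2 (hbpos _).le
      _ = min (sphMass b m o (r + 1)) (sphMass b m o (r + 2)) :=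
          div_mul_cancel₀ _ (hbpos _).ne'
  have hgns : ¬ Summable g := by
    intro hs
    apply hdiv
    have h1 : ∀ᶠ n in Filter.atTop, g n < 1 :=
      hs.tendsto_atTop_zero.eventually_lt_const one_pos
    have hev : ∀ᶠ n in Filter.atTop, g n = u n := by
      filter_upwards [h1] with n hn
      have hun : u n < 1 := by
        by_contra hcon
        push_neg at hcon
        rw [hg] at hn
        simp only [min_eq_left hcon] at hn
        exact absurd hn (lt_irrefl 1)
      exact min_eq_right hun.le
    obtain ⟨N, hN⟩ := Filter.eventually_atTop.mp hev
    have hgN : Summable (fun n => g (n + N)) := (summable_nat_add_iff N).mpr hs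
    have huN : Summable (fun n => u (n + N)) :=
      hgN.congr (fun n => hN (n + N) (by omega))
    exact (summable_nat_add_iff N).mp huN
  have hT : Filter.Tendsto (fun K => ∑ i ∈ Finset.range K, g i) Filter.atTop Filter.atTop :=
    not_not.mp fun h => hgns ((summable_iff_not_tendsto_nat_atTop_of_nonneg hg0).mpr h)
  set F : ℕ → ℕ → ℝ := fun n k => max (1 - ∑ r ∈ Finset.Ico n (k - 1), g r) 0 with hF
  have hF1 : ∀ n k, k ≤ n + 1 → F n k = 1 := by
    intro n k hk
    rw [hF]
    dsimp only
    rw [Finset.Ico_eq_empty (by omega : ¬ n < k - 1), Finset.sum_empty, sub_zero]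
    exact max_eq_left zero_le_one
  have hFmono : ∀ n k, F n (k + 1) ≤ F n k := by
    intro n k
    refine max_le_max ?_ le_rfl
    refine sub_le_sub_left ?_ 1
    exact Finset.sum_le_sum_of_subset_of_nonneg
      (Finset.Ico_subset_Ico le_rfl (by omega)) (fun i _ _ => hg0 i)
  have hδ : ∀ n k, F n k - F n (k + 1) ≤ g (k - 1) := by
    intro n k
    by_cases hnk : k ≤ n
    · rw [hF1 n k (by omega), hF1 n (k + 1) (by omega)]
      simpa using hg0 (k - 1)
    · push_neg at hnk
      have hk1 : 1 ≤ k := by omega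
      have hsum : ∑ r ∈ Finset.Ico n ((k + 1) - 1), g r =
          (∑ r ∈ Finset.Ico n (k - 1), g r) + g (k - 1) := by
        have e1 : (k + 1) - 1 = (k - 1) + 1 := by omega
        rw [e1, Finset.sum_Ico_succ_top (by omega : n ≤ k - 1)]
      rw [hF]
      dsimp only
      rw [hsum, show (1:ℝ) - ((∑ r ∈ Finset.Ico n (k - 1), g r) + g (k - 1)) =
        (1 - ∑ r ∈ Finset.Ico n (k - 1), g r) - g (k - 1) by ring]
      set a := 1 - ∑ r ∈ Finset.Ico n (k - 1), g r with ha
      calc max a 0 - max (a - g (k - 1)) 0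
          ≤ |max a 0 - max (a - g (k - 1)) 0| := le_abs_self _
        _ ≤ |a - (a - g (k - 1))| := abs_max_sub_max_le_abs _ _ _
        _ = g (k - 1) := by
            rw [show a - (a - g (k - 1)) = g (k - 1) by ring, abs_of_nonneg (hg0 _)]
  have hFzero : ∀ n, ∃ K, ∀ k, K ≤ k → F n k = 0 := by
    intro n
    obtain ⟨K, hK1, hK2⟩ :=
      ((Filter.tendsto_atTop.mp hT ((∑ i ∈ Finset.range n, g i) + 1)).and
        (Filter.eventually_ge_atTop n)).exists
    refine ⟨K + 2, fun k hk => ?_⟩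
    have hsub : ∑ r ∈ Finset.Ico n K, g r ≤ ∑ r ∈ Finset.Ico n (k - 1), g r :=
      Finset.sum_le_sum_of_subset_of_nonneg
        (Finset.Ico_subset_Ico le_rfl (by omega)) (fun i _ _ => hg0 i)
    have hIco : ∑ r ∈ Finset.Ico n K, g r =
        (∑ r ∈ Finset.range K, g r) - ∑ r ∈ Finset.range n, g r :=
      Finset.sum_Ico_eq_sub g hK2
    rw [hF]
    dsimp only
    refine max_eq_right ?_
    rw [hIco] at hsub
    linarith
  -- κ identities in convenient form
  have key1 : ∀ (k' : ℕ) (x' : X), combDist b o x' = k' →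
      (1 / m x') * ∑ y ∈ sphF b o hconn hlf (k' + 1), b x' y =
        bdry b o k' / sphMass b m o k' :=
    fun k' x' hx' => (eq_div_iff (hmpos k').ne').mpr (kplus_eq' b m o hm hwss hconn hlf hx')
  have key2 : ∀ (k' : ℕ) (x' : X), combDist b o x' = k' + 1 →
      (1 / m x') * ∑ y ∈ sphF b o hconn hlf k', b x' y =
        bdry b o k' / sphMass b m o (k' + 1) :=
    fun k' x' hx' => (eq_div_iff (hmpos (k' + 1)).ne').mpr
      (kminus_eq' b m o hb hm hwss hconn hlf hx')
  refine ⟨fun n x => F n (combDist b o x), fun n => ⟨?_, ?_, ?_⟩, ?_⟩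
  · -- finite support
    obtain ⟨K, hK⟩ := hFzero n
    refine Set.Finite.subset
      (Set.Finite.biUnion (Set.finite_Iio K)
        (fun j _ => sphere_finite' b o hconn hlf j)) ?_
    intro x hx
    have hxK : combDist b o x < K := by
      by_contra hcon
      push_neg at hcon
      exact hx (hK _ hcon)
    exact Set.mem_biUnion hxK rfl
  · -- radially symmetric
    intro x y hxy
    dsimp only
    rw [hxy]
  · -- gradient bound
    intro x
    set k := combDist b o x with hk
    set E : Finset X := (hlf x).toFinset with hE
    have hEmem : ∀ y, y ∈ E ↔ 0 < b x y := fun y => (hlf x).mem_toFinset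
    have hbz : ∀ y, y ∉ E → b x y = 0 := fun y hy =>
      le_antisymm (not_lt.mp fun h => hy ((hEmem y).mpr h)) (hb.nonneg x y)
    set t : X → ℝ := fun y => b x y * (F n k - F n (combDist b o y)) ^ 2 with ht
    set A := E.filter (fun y => combDist b o y = k + 1) with hA
    set B := E.filter (fun y => combDist b o y + 1 = k) with hB
    have hts : ∑' y, b x y * (F n k - F n (combDist b o y)) ^ 2 = ∑ y ∈ E, t y :=
      tsum_eq_sum (fun y hy => by rw [hbz y hy, zero_mul])
    have hsplit : ∑ y ∈ E, t y = ∑ y ∈ A, t y + ∑ y ∈ B, t y := by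
      rw [← Finset.sum_filter_add_sum_filter_not E (fun y => combDist b o y = k + 1) t]
      congr 1
      rw [← Finset.sum_filter_add_sum_filter_not
        (E.filter (fun y => ¬ combDist b o y = k + 1)) (fun y => combDist b o y + 1 = k) t]
      have hBeq : (E.filter (fun y => ¬ combDist b o y = k + 1)).filter
          (fun y => combDist b o y + 1 = k) = B := by
        rw [Finset.filter_filter, hB]
        apply Finset.filter_congr
        intro y _
        constructor
        · rintro ⟨-, h2⟩; exact h2
        · intro h2; exact ⟨by omega, h2⟩
      have hrest : ∑ y ∈ (E.filter (fun y => ¬ combDist b o y = k + 1)).filter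
          (fun y => ¬ combDist b o y + 1 = k), t y = 0 := by
        refine Finset.sum_eq_zero fun y hy => ?_
        simp only [Finset.mem_filter] at hy
        obtain ⟨⟨hyE, hy1⟩, hy2⟩ := hy
        have hadj : 0 < b x y := (hEmem y).mp hyE
        have hd1 : combDist b o y ≤ k + 1 := hk ▸ combDist_le_succ_of_adj' b o hconn hadj
        have hd2 : k ≤ combDist b o y + 1 := by
          rw [hk]
          exact combDist_le_succ_of_adj' b o hconn (by rw [hb.symm]; exact hadj)
        have hdk : combDist b o y = k := by omega
        rw [ht]
        dsimp only
        rw [hdk, sub_self]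
        ring
      rw [hBeq, hrest, add_zero]
    have hAval : ∑ y ∈ A, t y = (∑ y ∈ A, b x y) * (F n k - F n (k + 1)) ^ 2 := by
      rw [Finset.sum_mul]
      refine Finset.sum_congr rfl fun y hy => ?_
      have : combDist b o y = k + 1 := (Finset.mem_filter.mp hy).2
      rw [ht]
      dsimp only
      rw [this]
    have hBval : ∑ y ∈ B, t y = (∑ y ∈ B, b x y) * (F n k - F n (k - 1)) ^ 2 := by
      rw [Finset.sum_mul]
      refine Finset.sum_congr rfl fun y hy => ?_
      have h1 : combDist b o y + 1 = k := (Finset.mem_filter.mp hy).2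
      have : combDist b o y = k - 1 := by omega
      rw [ht]
      dsimp only
      rw [this]
    have hAS : ∑ y ∈ A, b x y = ∑ y ∈ sphF b o hconn hlf (k + 1), b x y := by
      refine Finset.sum_subset ?_ ?_
      · intro y hy
        exact (mem_sphF b o).mpr (Finset.mem_filter.mp hy).2
      · intro z hz hzA
        refine hbz z fun hzE => hzA ?_
        exact Finset.mem_filter.mpr ⟨hzE, (mem_sphF b o).mp hz⟩
    -- first term bound
    have hterm1 : (1 / m x) * (∑ y ∈ A, b x y) * (F n k - F n (k + 1)) ^ 2 ≤ 1 := by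
      rcases Nat.eq_zero_or_pos k with hk0 | hk1
      · have e0 : F n k = 1 := by rw [hk0]; exact hF1 n 0 (by omega)
        have e1 : F n (k + 1) = 1 := by rw [hk0]; exact hF1 n 1 (by omega)
        rw [e0, e1, sub_self]
        norm_num
      · have hkey := key1 k x hk.symm
        rw [hAS, hkey]
        have hδp0 : 0 ≤ F n k - F n (k + 1) := sub_nonneg.mpr (hFmono n k)
        have hsq : (F n k - F n (k + 1)) ^ 2 * bdry b o k ≤ sphMass b m o k := by
          have h1 : (F n k - F n (k + 1)) ^ 2 ≤ g (k - 1) ^ 2 :=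
            pow_le_pow_left₀ hδp0 (hδ n k) 2
          have h2 := hgsq (k - 1)
          have e : k - 1 + 1 = k := by omega
          rw [e] at h2
          have h3 : min (sphMass b m o k) (sphMass b m o (k - 1 + 2)) ≤
              sphMass b m o k := min_le_left _ _
          nlinarith [hbpos k]
        rw [div_mul_eq_mul_div, div_le_one (hmpos k)]
        calc bdry b o k * (F n k - F n (k + 1)) ^ 2
            = (F n k - F n (k + 1)) ^ 2 * bdry b o k := mul_comm _ _
          _ ≤ sphMass b m o k := hsq
    have hterm2 : (1 / m x) * (∑ y ∈ B, b x y) * (F n k - F n (k - 1)) ^ 2 ≤ 1 := by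
      by_cases hk0 : k = 0
      · have hBe : B = ∅ := by
          rw [hB]
          refine Finset.filter_eq_empty_iff.mpr fun y _ => by omega
        rw [hBe, Finset.sum_empty, mul_zero, zero_mul]
        norm_num
      · by_cases hk1 : k = 1
        · have e0 : F n k = 1 := by rw [hk1]; exact hF1 n 1 (by omega)
          have e1 : F n (k - 1) = 1 := by rw [hk1]; exact hF1 n 0 (by omega)
          rw [e0, e1, sub_self]
          norm_num
        · have hk2 : 2 ≤ k := by omega
          have hBS : ∑ y ∈ B, b x y = ∑ y ∈ sphF b o hconn hlf (k - 1), b x y := by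
            refine Finset.sum_subset ?_ ?_
            · intro y hy
              have h1 : combDist b o y + 1 = k := (Finset.mem_filter.mp hy).2
              exact (mem_sphF b o).mpr (by omega)
            · intro z hz hzB
              refine hbz z fun hzE => hzB ?_
              have h1 := (mem_sphF b o).mp hz
              exact Finset.mem_filter.mpr ⟨hzE, by omega⟩
          have hxk : combDist b o x = (k - 1) + 1 := by omega
          have hkey := key2 (k - 1) x hxk
          have e : k - 1 + 1 = k := by omega
          rw [e] at hkey
          rw [hBS, hkey]
          have hδ0 : 0 ≤ F n (k - 1) - F n k := by
            have h1 := hFmono n (k - 1)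
            rw [e] at h1
            linarith
          have hδ1 : F n (k - 1) - F n k ≤ g (k - 2) := by
            have h1 := hδ n (k - 1)
            rw [e] at h1
            have e2 : k - 1 - 1 = k - 2 := by omega
            rw [e2] at h1
            exact h1
          have hsq2 : (F n k - F n (k - 1)) ^ 2 * bdry b o (k - 1) ≤ sphMass b m o k := by
            have hrw : (F n k - F n (k - 1)) ^ 2 = (F n (k - 1) - F n k) ^ 2 := by ring
            have h1 : (F n (k - 1) - F n k) ^ 2 ≤ g (k - 2) ^ 2 :=
              pow_le_pow_left₀ hδ0 hδ1 2
            have h2 := hgsq (k - 2)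
            have e2 : k - 2 + 1 = k - 1 := by omega
            have e3 : k - 2 + 2 = k := by omega
            rw [e2, e3] at h2
            have h3 : min (sphMass b m o (k - 1)) (sphMass b m o k) ≤ sphMass b m o k :=
              min_le_right _ _
            nlinarith [hbpos (k - 1)]
          rw [div_mul_eq_mul_div, div_le_one (hmpos k)]
          calc bdry b o (k - 1) * (F n k - F n (k - 1)) ^ 2
              = (F n k - F n (k - 1)) ^ 2 * bdry b o (k - 1) := mul_comm _ _
            _ ≤ sphMass b m o k := hsq2
    have hgoal : (1 / m x) * ∑' y, b x y * (F n k - F n (combDist b o y)) ^ 2 ≤ 2 := by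
      rw [hts, hsplit, hAval, hBval, mul_add, ← mul_assoc, ← mul_assoc]
      linarith
    exact hgoal
  · -- tendsto
    intro x
    refine Filter.Tendsto.congr' ?_ tendsto_const_nhds
    filter_upwards [Filter.eventually_ge_atTop (combDist b o x)] with n hn
    exact (hF1 n _ (by omega)).symm
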